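/- Let N ≥ 1, let δ be a real number, and let (μ_i)_{i≥0} be a real sequence. Define ν_i := μ_{i+1} + δ μ_i for i ≥ 0. Let τ_0 := 1, τ_i := det(μ_{j+k})_{j,k=0}^{i−1} and σ_0 := 1, σ_i := det(ν_{j+k})_{j,k=0}^{i−1}, and assume τ_i ≠ 0 and σ_i ≠ 0 for i = 1,…,N. Let φ_i(z) and ψ_i(z) be the monic orthogonal-polynomial determinants built from (μ_i) and (ν_i) respectively: φ_0(z) := 1 and φ_i(z) := (1/τ_i) det of the (i+1)×(i+1) matrix whose first i rows are (μ_k, μ_{k+1}, …, μ_{k+i}) for k = 0,…,i−1 and last row (1, z, …, z^i), and similarly for ψ_i(z) with ν in place of μ. Set Q̄_i := τ_{i−1} σ_i / (τ_i σ_{i−1}) for 1 ≤ i ≤ N and Ē_i := τ_{i+1} σ_{i−1} / (τ_i σ_i) for 0 ≤ i ≤ N−1 (so Ē_0 = 0 since τ_{−1} := 0). Then, as identities of polynomials in z: (a) (z + δ)·ψ_{i−1}(z) = φ_i(z) + Q̄_i φ_{i−1}(z) for i = 1,…,N; (b) φ_i(z) = ψ_i(z) + Ē_i ψ_{i−1}(z)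 for i = 0,…,N−1. -/

import Mathlib

open Finset

/-- Hankel determinant τ_i of a moment sequence. -/
noncomputable def hank (μ : ℕ → ℝ) (i : ℕ) : ℝ :=
  Matrix.det (Matrix.of fun j k : Fin i => μ (j.1 + k.1))

/-- The monic orthogonal polynomial determinant built from a moment sequence. -/
noncomputable def opoly (μ : ℕ → ℝ) (i : ℕ) (z : ℝ) : ℝ :=
  if i = 0 then 1 else
    (1 / hank μ i) *
      Matrix.det (Matrix.of fun k j : Fin (i + 1) =>
        if k.1 < i then μ (k.1 + j.1) else z ^ j.1)

/-- The shifted moment sequence ν_i := μ_{i+1} + δ μ_i. -/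
noncomputable def nuSeq (δ : ℝ) (μ : ℕ → ℝ) : ℕ → ℝ :=
  fun m => μ (m + 1) + δ * μ m

/-- Q̄_i := τ_{i−1} σ_i / (τ_i σ_{i−1}). -/
noncomputable def Qbar (δ : ℝ) (μ : ℕ → ℝ) (i : ℕ) : ℝ :=
  hank μ (i - 1) * hank (nuSeq δ μ) i / (hank μ i * hank (nuSeq δ μ) (i - 1))

/-- Ē_i := τ_{i+1} σ_{i−1} / (τ_i σ_i), with Ē_0 = 0. -/
noncomputable def Ebar (δ : ℝ) (μ : ℕ → ℝ) (i : ℕ) : ℝ :=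
  if i = 0 then 0 else
    hank μ (i + 1) * hank (nuSeq δ μ) (i - 1) / (hank μ i * hank (nuSeq δ μ) i)

open Polynomial

noncomputable def Lf (μ : ℕ → ℝ) : ℝ[X] →ₗ[ℝ] ℝ where
  toFun p := p.sum fun m a => a * μ m
  map_add' p q := Polynomial.sum_add_index p q _ (fun _ => zero_mul _) (fun _ _ _ => add_mul _ _ _)
  map_smul' b p := by
    simp only [RingHom.id_apply, smul_eq_mul]
    rw [Polynomial.sum_smul_index p b (fun m a => a * μ m) (fun m => zero_mul _), Polynomial.sum_def,
      Polynomial.sum_def, Finset.mul_sum]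
    simp [mul_assoc]

lemma Lf_monomial (μ : ℕ → ℝ) (n : ℕ) (a : ℝ) : Lf μ (monomial n a) = a * μ n := by
  show (monomial n a).sum (fun m a => a * μ m) = a * μ n
  exact Polynomial.sum_monomial_index a _ (zero_mul _)

lemma Lf_C_mul (μ : ℕ → ℝ) (a : ℝ) (p : ℝ[X]) : Lf μ (C a * p) = a * Lf μ p := by
  rw [← smul_eq_C_mul, map_smul, smul_eq_mul]

noncomputable def detM (μ : ℕ → ℝ) (i : ℕ) : ℝ[X] :=
  Matrix.det (Matrix.of fun k j : Fin (i + 1) => if k.1 < i then C (μ (k.1 + j.1)) else X ^ j.1)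

noncomputable def opolyP (μ : ℕ → ℝ) (i : ℕ) : ℝ[X] := C (1 / hank μ i) * detM μ i

lemma hank_zero (μ : ℕ → ℝ) : hank μ 0 = 1 := Matrix.det_fin_zero

noncomputable def minorM (μ : ℕ → ℝ) (i : ℕ) (j : Fin (i + 1)) : ℝ :=
  Matrix.det ((Matrix.of fun k l : Fin (i + 1) => μ (k.1 + l.1)).submatrix Fin.castSucc j.succAbove)

lemma detM_expand (μ : ℕ → ℝ) (i : ℕ) :
    detM μ i = ∑ j : Fin (i + 1), C ((-1) ^ (i + j.1) * minorM μ i j) * X ^ j.1 := by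
  rw [detM, Matrix.det_succ_row _ (Fin.last i)]
  refine Finset.sum_congr rfl fun j _ => ?_
  have h1 : (Matrix.of fun k j : Fin (i + 1) =>
      if k.1 < i then C (μ (k.1 + j.1)) else (X : ℝ[X]) ^ j.1) (Fin.last i) j = X ^ j.1 := by
    simp [Fin.last]
  have h2 : ((Matrix.of fun k j : Fin (i + 1) =>
      if k.1 < i then C (μ (k.1 + j.1)) else (X : ℝ[X]) ^ j.1).submatrix
        (Fin.last i).succAbove j.succAbove) =
      ((Matrix.of fun k l : Fin (i + 1) => μ (k.1 + l.1)).submatrix Fin.castSucc j.succAbove).map C := by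
    ext k l
    simp [Fin.succAbove_last, Matrix.submatrix, k.isLt]
  rw [h1, h2, ← RingHom.mapMatrix_apply, ← RingHom.map_det, minorM]
  simp only [Fin.val_last, map_mul, map_pow, map_neg, map_one]
  ring

lemma minorM_last (μ : ℕ → ℝ) (i : ℕ) : minorM μ i (Fin.last i) = hank μ i := by
  unfold minorM hank
  congr 1
  ext k l
  simp [Fin.succAbove_last, Matrix.submatrix]

lemma detM_coeff_self (μ : ℕ → ℝ) (i : ℕ) : (detM μ i).coeff i = hank μ i := by
  rw [detM_expand, Polynomial.finset_sum_coeff]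
  rw [Finset.sum_eq_single (Fin.last i)]
  · rw [coeff_C_mul, coeff_X_pow]
    simp [minorM_last, Even.neg_one_pow (⟨i, rfl⟩ : Even (i + i))]
  · intro j _ hj
    have : j.1 ≠ i := fun h => hj (Fin.ext h)
    rw [coeff_C_mul, coeff_X_pow, if_neg (fun h => this h.symm), mul_zero]
  · simp

lemma detM_coeff_gt (μ : ℕ → ℝ) (i m : ℕ) (hm : i < m) : (detM μ i).coeff m = 0 := by
  rw [detM_expand, Polynomial.finset_sum_coeff]
  refine Finset.sum_eq_zero fun j _ => ?_
  have : j.1 ≠ m := by omega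
  rw [coeff_C_mul, coeff_X_pow, if_neg (fun h => this h.symm), mul_zero]

lemma Lf_X_pow_mul_detM (μ : ℕ → ℝ) (i k : ℕ) :
    Lf μ (X ^ k * detM μ i) =
      Matrix.det (Matrix.of fun k' j : Fin (i + 1) =>
        if k'.1 < i then μ (k'.1 + j.1) else μ (k + j.1)) := by
  rw [detM_expand, Finset.mul_sum, map_sum, Matrix.det_succ_row _ (Fin.last i)]
  refine Finset.sum_congr rfl fun j _ => ?_
  have h1 : (Matrix.of fun k' j : Fin (i + 1) =>
      if k'.1 < i then μ (k'.1 + j.1) else μ (k + j.1)) (Fin.last i) j = μ (k + j.1) := by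
    simp [Fin.last]
  have h2 : ((Matrix.of fun k' j : Fin (i + 1) =>
      if k'.1 < i then μ (k'.1 + j.1) else μ (k + j.1)).submatrix
        (Fin.last i).succAbove j.succAbove) =
      (Matrix.of fun k' l : Fin (i + 1) => μ (k'.1 + l.1)).submatrix Fin.castSucc j.succAbove := by
    ext a b
    simp [Fin.succAbove_last, Matrix.submatrix, a.isLt]
  rw [h1, h2]
  have h3 : (X : ℝ[X]) ^ k * (C ((-1) ^ (i + j.1) * minorM μ i j) * X ^ j.1)
      = monomial (k + j.1) ((-1) ^ (i + j.1) * minorM μ i j) := by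
    rw [← C_mul_X_pow_eq_monomial]; ring
  rw [h3, Lf_monomial]
  show _ = (-1 : ℝ) ^ ((Fin.last i).1 + j.1) * _ * minorM μ i j
  simp only [Fin.val_last]
  ring

lemma Lf_X_pow_mul_detM_lt (μ : ℕ → ℝ) (i k : ℕ) (hk : k < i) :
    Lf μ (X ^ k * detM μ i) = 0 := by
  rw [Lf_X_pow_mul_detM]
  refine Matrix.det_zero_of_row_eq (i := ⟨k, by omega⟩) (j := Fin.last i) ?_ ?_
  · intro h
    have := congrArg Fin.val h
    simp [Fin.last] at this
    omega
  · funext j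
    simp [Fin.last, hk]

lemma Lf_X_pow_mul_detM_self (μ : ℕ → ℝ) (i : ℕ) :
    Lf μ (X ^ i * detM μ i) = hank μ (i + 1) := by
  rw [Lf_X_pow_mul_detM, hank]
  congr 1
  ext k j
  by_cases h : k.1 < i
  · simp [h]
  · have : k.1 = i := by omega
    simp [h, this]

lemma Lf_opolyP_lt (μ : ℕ → ℝ) {i k : ℕ} (hk : k < i) : Lf μ (X ^ k * opolyP μ i) = 0 := by
  rw [opolyP, mul_left_comm, Lf_C_mul, Lf_X_pow_mul_detM_lt μ i k hk, mul_zero]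

lemma Lf_opolyP_self (μ : ℕ → ℝ) (i : ℕ) :
    Lf μ (X ^ i * opolyP μ i) = hank μ (i + 1) / hank μ i := by
  rw [opolyP, mul_left_comm, Lf_C_mul, Lf_X_pow_mul_detM_self]
  ring

lemma opolyP_coeff_self (μ : ℕ → ℝ) (i : ℕ) (h : hank μ i ≠ 0) :
    (opolyP μ i).coeff i = 1 := by
  rw [opolyP, coeff_C_mul, detM_coeff_self, one_div, inv_mul_cancel₀ h]

lemma opolyP_coeff_gt (μ : ℕ → ℝ) {i m : ℕ} (hm : i < m) : (opolyP μ i).coeff m = 0 := by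
  rw [opolyP, coeff_C_mul, detM_coeff_gt μ i m hm, mul_zero]

lemma opoly_eval (μ : ℕ → ℝ) (i : ℕ) (z : ℝ) : opoly μ i z = (opolyP μ i).eval z := by
  rw [opoly, opolyP, eval_mul, eval_C]
  rcases Nat.eq_zero_or_pos i with h | h
  · subst h
    rw [if_pos rfl, hank_zero]
    have : detM μ 0 = 1 := by
      rw [detM, Matrix.det_fin_one]
      simp
    rw [this]
    norm_num
  · rw [if_neg (by omega), detM]
    simp only [← coe_evalRingHom, RingHom.map_det]
    congr 2
    ext k j
    by_cases hk : k.1 < i <;> simp [hk, RingHom.mapMatrix_apply]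

lemma Lf_nu (δ : ℝ) (μ : ℕ → ℝ) (p : ℝ[X]) :
    Lf (nuSeq δ μ) p = Lf μ ((X + C δ) * p) := by
  induction p using Polynomial.induction_on' with
  | add p q hp hq => rw [map_add, mul_add, map_add, hp, hq]
  | monomial n a =>
    have : (X + C δ) * monomial n a = monomial (n + 1) a + monomial n (δ * a) := by
      rw [add_mul, X_mul_monomial, C_mul_monomial]
    rw [this, map_add, Lf_monomial, Lf_monomial, Lf_monomial, nuSeq]
    ring

lemma kill (μ : ℕ → ℝ) (i : ℕ) (hτ : hank μ i ≠ 0) (p : ℝ[X])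
    (hdeg : ∀ m, i ≤ m → p.coeff m = 0)
    (horth : ∀ k, k < i → Lf μ (X ^ k * p) = 0) : p = 0 := by
  have hp : p = ∑ m ∈ Finset.range i, monomial m (p.coeff m) := by
    ext n
    rw [Polynomial.finset_sum_coeff]
    by_cases hn : n < i
    · rw [Finset.sum_eq_single n]
      · rw [coeff_monomial, if_pos rfl]
      · intro b _ hb
        rw [coeff_monomial, if_neg hb]
      · intro h
        exact absurd (Finset.mem_range.mpr hn) h
    · rw [hdeg n (by omega), Finset.sum_eq_zero]
      intro b hb
      rw [coeff_monomial, if_neg (by simp at hb; omega)]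
  have hrep : ∀ k, Lf μ (X ^ k * p) = ∑ m ∈ Finset.range i, p.coeff m * μ (k + m) := by
    intro k
    conv_lhs => rw [hp]
    rw [Finset.mul_sum, map_sum]
    refine Finset.sum_congr rfl fun m _ => ?_
    rw [X_pow_mul_monomial, Lf_monomial, Nat.add_comm m k]
  set H : Matrix (Fin i) (Fin i) ℝ := Matrix.of fun j k : Fin i => μ (j.1 + k.1) with hH
  have hdet : H.det = hank μ i := rfl
  set v : Fin i → ℝ := fun m => p.coeff m.1 with hv
  have hmv : H.mulVec v = 0 := by
    funext k
    have := horth k.1 k.isLt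
    rw [hrep] at this
    rw [Matrix.mulVec]
    show ∑ m : Fin i, H k m * v m = 0
    rw [← this, ← Fin.sum_univ_eq_sum_range (fun m => p.coeff m * μ (k.1 + m))]
    exact Finset.sum_congr rfl fun m _ => by rw [hH]; simp [hv, mul_comm]
  have hvz : v = 0 := by
    have hu : IsUnit H.det := by rw [hdet]; exact isUnit_iff_ne_zero.mpr hτ
    calc v = (H⁻¹ * H).mulVec v := by rw [Matrix.nonsing_inv_mul H hu, Matrix.one_mulVec]
    _ = H⁻¹.mulVec (H.mulVec v) := by rw [← Matrix.mulVec_mulVec]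
    _ = 0 := by rw [hmv, Matrix.mulVec_zero]
  ext n
  rw [coeff_zero]
  by_cases hn : n < i
  · exact congrFun hvz ⟨n, hn⟩
  · exact hdeg n (by omega)

lemma Lf_nu_pow (δ : ℝ) (μ : ℕ → ℝ) (k : ℕ) (q : ℝ[X]) :
    Lf (nuSeq δ μ) (X ^ k * q) = Lf μ (X ^ (k + 1) * q) + δ * Lf μ (X ^ k * q) := by
  rw [Lf_nu]
  have : (X + C δ) * (X ^ k * q) = X ^ (k + 1) * q + C δ * (X ^ k * q) := by ring
  rw [this, map_add, Lf_C_mul]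

theorem stmt4 (N : ℕ) (hN : 1 ≤ N) (δ : ℝ) (μ : ℕ → ℝ)
    (hτ : ∀ i, 1 ≤ i → i ≤ N → hank μ i ≠ 0)
    (hσ : ∀ i, 1 ≤ i → i ≤ N → hank (nuSeq δ μ) i ≠ 0) :
    (∀ i, 1 ≤ i → i ≤ N → ∀ z : ℝ,
      (z + δ) * opoly (nuSeq δ μ) (i - 1) z
        = opoly μ i z + Qbar δ μ i * opoly μ (i - 1) z) ∧
    (∀ i, i ≤ N - 1 → ∀ z : ℝ,
      opoly μ i z = opoly (nuSeq δ μ) i z + Ebar δ μ i * opoly (nuSeq δ μ) (i - 1) z) := by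
  constructor
  · rintro i hi1 hiN z
    obtain ⟨n, rfl⟩ : ∃ n, i = n + 1 := ⟨i - 1, by omega⟩
    simp only [Nat.add_sub_cancel]
    have hτ1 : hank μ (n + 1) ≠ 0 := hτ _ (by omega) hiN
    have hτ0 : hank μ n ≠ 0 := by
      rcases Nat.eq_zero_or_pos n with h | h
      · rw [h, hank_zero]; norm_num
      · exact hτ n h (by omega)
    have hσ1 : hank (nuSeq δ μ) (n + 1) ≠ 0 := hσ _ (by omega) hiN
    have hσ0 : hank (nuSeq δ μ) n ≠ 0 := by
      rcases Nat.eq_zero_or_pos n with h | h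
      · rw [h, hank_zero]; norm_num
      · exact hσ n h (by omega)
    have hQ : Qbar δ μ (n + 1)
        = hank μ n * hank (nuSeq δ μ) (n + 1) / (hank μ (n + 1) * hank (nuSeq δ μ) n) := by
      rw [Qbar, Nat.add_sub_cancel]
    have hp0 : (X + C δ) * opolyP (nuSeq δ μ) n
        - (opolyP μ (n + 1) + C (Qbar δ μ (n + 1)) * opolyP μ n) = 0 := by
      apply kill μ (n + 1) hτ1
      · intro m hm
        obtain ⟨m', rfl⟩ : ∃ m', m = m' + 1 := ⟨m - 1, by omega⟩
        rw [coeff_sub, coeff_add, add_mul, coeff_add, coeff_X_mul, coeff_C_mul, coeff_C_mul]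
        rcases eq_or_lt_of_le (show n ≤ m' by omega) with h | h
        · subst h
          rw [opolyP_coeff_self (nuSeq δ μ) _ hσ0, opolyP_coeff_self μ _ hτ1,
            opolyP_coeff_gt (nuSeq δ μ) (Nat.lt_succ_self _),
            opolyP_coeff_gt μ (Nat.lt_succ_self _)]
          ring
        · rw [opolyP_coeff_gt (nuSeq δ μ) h, opolyP_coeff_gt (nuSeq δ μ) (show n < m' + 1 by omega),
            opolyP_coeff_gt μ (show n + 1 < m' + 1 by omega),
            opolyP_coeff_gt μ (show n < m' + 1 by omega)]
          ring
      · intro k hk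
        have e1 : (X : ℝ[X]) ^ k * ((X + C δ) * opolyP (nuSeq δ μ) n
            - (opolyP μ (n + 1) + C (Qbar δ μ (n + 1)) * opolyP μ n))
            = (X ^ (k + 1) * opolyP (nuSeq δ μ) n + C δ * (X ^ k * opolyP (nuSeq δ μ) n))
              - (X ^ k * opolyP μ (n + 1) + C (Qbar δ μ (n + 1)) * (X ^ k * opolyP μ n)) := by
          ring
        rw [e1, map_sub, map_add, map_add, Lf_C_mul, Lf_C_mul, ← Lf_nu_pow]
        rcases eq_or_lt_of_le (show k ≤ n by omega) with h | h
        · subst h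
          rw [Lf_opolyP_self, Lf_opolyP_lt μ (Nat.lt_succ_self _), Lf_opolyP_self, hQ]
          field_simp
          ring
        · rw [Lf_opolyP_lt (nuSeq δ μ) h, Lf_opolyP_lt μ (show k < n + 1 by omega),
            Lf_opolyP_lt μ h]
          ring
    have := congrArg (eval z) hp0
    simp only [eval_sub, eval_add, eval_mul, eval_C, eval_X, eval_zero] at this
    rw [opoly_eval, opoly_eval, opoly_eval]
    linarith
  · rintro i hiN z
    rcases Nat.eq_zero_or_pos i with rfl | hi1
    · simp [opoly, Ebar]
    obtain ⟨n, rfl⟩ : ∃ n, i = n + 1 := ⟨i - 1, by omega⟩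
    simp only [Nat.add_sub_cancel]
    have hτ1 : hank μ (n + 1) ≠ 0 := hτ _ (by omega) (by omega)
    have hσ1 : hank (nuSeq δ μ) (n + 1) ≠ 0 := hσ _ (by omega) (by omega)
    have hσ0 : hank (nuSeq δ μ) n ≠ 0 := by
      rcases Nat.eq_zero_or_pos n with h | h
      · rw [h, hank_zero]; norm_num
      · exact hσ n h (by omega)
    have hE : Ebar δ μ (n + 1)
        = hank μ (n + 2) * hank (nuSeq δ μ) n / (hank μ (n + 1) * hank (nuSeq δ μ) (n + 1)) := by
      rw [Ebar, if_neg (Nat.succ_ne_zero n), Nat.add_sub_cancel]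
    have hp0 : opolyP μ (n + 1)
        - (opolyP (nuSeq δ μ) (n + 1) + C (Ebar δ μ (n + 1)) * opolyP (nuSeq δ μ) n) = 0 := by
      apply kill (nuSeq δ μ) (n + 1) hσ1
      · intro m hm
        rw [coeff_sub, coeff_add, coeff_C_mul]
        rcases eq_or_lt_of_le hm with h | h
        · subst h
          rw [opolyP_coeff_self μ _ hτ1, opolyP_coeff_self (nuSeq δ μ) _ hσ1,
            opolyP_coeff_gt (nuSeq δ μ) (Nat.lt_succ_self _)]
          ring
        · rw [opolyP_coeff_gt μ h, opolyP_coeff_gt (nuSeq δ μ) h,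
            opolyP_coeff_gt (nuSeq δ μ) (show n < m by omega)]
          ring
      · intro k hk
        have e1 : (X : ℝ[X]) ^ k * (opolyP μ (n + 1)
            - (opolyP (nuSeq δ μ) (n + 1) + C (Ebar δ μ (n + 1)) * opolyP (nuSeq δ μ) n))
            = X ^ k * opolyP μ (n + 1)
              - (X ^ k * opolyP (nuSeq δ μ) (n + 1)
                + C (Ebar δ μ (n + 1)) * (X ^ k * opolyP (nuSeq δ μ) n)) := by
          ring
        rw [e1, map_sub, map_add, Lf_C_mul, Lf_nu_pow, Lf_opolyP_lt (nuSeq δ μ) hk]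
        rcases eq_or_lt_of_le (show k ≤ n by omega) with h | h
        · subst h
          rw [Lf_opolyP_self, Lf_opolyP_lt μ (Nat.lt_succ_self _), Lf_opolyP_self, hE]
          field_simp
          ring
        · rw [Lf_opolyP_lt μ (show k + 1 < n + 1 by omega), Lf_opolyP_lt μ (show k < n + 1 by omega),
            Lf_opolyP_lt (nuSeq δ μ) h]
          ring
    have := congrArg (eval z) hp0
    simp only [eval_sub, eval_add, eval_mul, eval_C, eval_zero] at this
    rw [opoly_eval, opoly_eval, opoly_eval]
    linarith
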